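/- Truncated termination over the order: assume X is finite and let P be endowed with a monomial Σ-ordering. Let I ⊆ P be an ord-graded Σ-ideal and fix d ∈ ℕ. If I has an ord-homogeneous Σ-basis H such that H_d = {f ∈ H : ord(f) ≤ d} is finite, then I has an ord-homogeneous Gröbner Σ-basis G such that G_d = {f ∈ G : ord(f) ≤ d} is finite. -/

import Mathlib

/- Common setup: the monoid Σ = ⟨σ₁,…,σ_r⟩ ≅ (ℕ^r,+) is modelled additively as
`Fin r → ℕ`; the algebra of partial difference polynomials `P = K[X(Σ)]` is the
polynomial ring `MvPolynomial (X × (Fin r → ℕ)) K`, and its monomials are elements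
of `(X × (Fin r → ℕ)) →₀ ℕ`. -/

noncomputable section

/-- The total degree `deg : Σ → ℕ` of an element of the monoid `Σ ≅ ℕ^r`. -/
def degS {r : ℕ} (σ : Fin r → ℕ) : ℕ := ∑ i, σ i

/-- The shift action of `σ ∈ Σ` on monomials: `σ · ∏ xᵢ(τᵢ)^{aᵢ} = ∏ xᵢ(στᵢ)^{aᵢ}`. -/
def shiftMon {V : Type*} {r : ℕ} (σ : Fin r → ℕ) (m : (V × (Fin r → ℕ)) →₀ ℕ) :
    (V × (Fin r → ℕ)) →₀ ℕ :=
  Finsupp.mapDomain (fun p => (p.1, σ + p.2)) m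

/-- The shift action of `σ ∈ Σ` on `P` by `K`-algebra endomorphisms,
determined by `σ · x(τ) = x(στ)`. -/
def shiftPoly (K : Type*) [CommSemiring K] {V : Type*} {r : ℕ} (σ : Fin r → ℕ) :
    MvPolynomial (V × (Fin r → ℕ)) K →ₐ[K] MvPolynomial (V × (Fin r → ℕ)) K :=
  MvPolynomial.rename (fun p => (p.1, σ + p.2))

/-- The orbit set `Σ · G` of a set of polynomials `G`. -/
def shiftSet (K : Type*) [CommSemiring K] {V : Type*} {r : ℕ}
    (G : Set (MvPolynomial (V × (Fin r → ℕ)) K)) :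
    Set (MvPolynomial (V × (Fin r → ℕ)) K) :=
  {p | ∃ (σ : Fin r → ℕ) (g : MvPolynomial (V × (Fin r → ℕ)) K), g ∈ G ∧ p = shiftPoly K σ g}

/-- The least common multiple of two monomials (pointwise maximum of exponents). -/
def lcmMon {V : Type*} {r : ℕ} (m n : (V × (Fin r → ℕ)) →₀ ℕ) : (V × (Fin r → ℕ)) →₀ ℕ :=
  Finsupp.zipWith max (max_self 0) m n

/-- The greatest common divisor of two monomials (pointwise minimum of exponents). -/
def gcdMon {V : Type*} {r : ℕ} (m n : (V × (Fin r → ℕ)) →₀ ℕ) : (V × (Fin r → ℕ)) →₀ ℕ :=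
  Finsupp.zipWith min (min_self 0) m n

/-- The strict relation of a linear order given as a term. -/
def oLT {α : Type*} (lo : LinearOrder α) (a b : α) : Prop := lo.lt a b

/-- The non-strict relation of a linear order given as a term. -/
def oLE {α : Type*} (lo : LinearOrder α) (a b : α) : Prop := lo.le a b

/-- `lo` is a *monomial ordering* of an additive (monomial) monoid: a linear order
which is a well-order, has the monomial `1` (written additively: `0`) as least
element, and is compatible with multiplication (written additively). -/
structure IsMonOrd {α : Type*} [AddCommMonoid α] (lo : LinearOrder α) : Prop where
  wf : WellFounded (oLT lo)
  zero_le : ∀ a : α, oLE lo 0 a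
  add_lt : ∀ a b c : α, oLT lo a b → oLT lo (c + a) (c + b)

/-- The leading monomial of a polynomial with respect to a monomial ordering
(junk value `1`, i.e. `0`, on the zero polynomial). -/
def lmo {K V : Type*} [CommSemiring K] {r : ℕ} (lo : LinearOrder ((V × (Fin r → ℕ)) →₀ ℕ))
    (f : MvPolynomial (V × (Fin r → ℕ)) K) : (V × (Fin r → ℕ)) →₀ ℕ :=
  haveI : Decidable (f = 0) := Classical.dec _
  if h : f = 0 then 0
  else @Finset.max' _ lo f.support
    (Finset.nonempty_iff_ne_empty.2 fun he => h (MvPolynomial.support_eq_empty.mp he))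

/-- The leading coefficient of a polynomial. -/
def lco {K V : Type*} [CommSemiring K] {r : ℕ} (lo : LinearOrder ((V × (Fin r → ℕ)) →₀ ℕ))
    (f : MvPolynomial (V × (Fin r → ℕ)) K) : K :=
  MvPolynomial.coeff (lmo lo f) f

/-- The S-polynomial `spoly(f,g) = (l/lt(f))·f − (l/lt(g))·g`, where
`l = lcm(lm f, lm g)`. -/
def spoly {K V : Type*} [Field K] {r : ℕ} (lo : LinearOrder ((V × (Fin r → ℕ)) →₀ ℕ))
    (f g : MvPolynomial (V × (Fin r → ℕ)) K) : MvPolynomial (V × (Fin r → ℕ)) K :=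
  MvPolynomial.monomial (lcmMon (lmo lo f) (lmo lo g) - lmo lo f) (lco lo f)⁻¹ * f -
  MvPolynomial.monomial (lcmMon (lmo lo f) (lmo lo g) - lmo lo g) (lco lo g)⁻¹ * g

/-- `f` has a Gröbner representation `f = ∑ qᵢ gᵢ` with respect to `G`:
`gᵢ ∈ G` and `lm(f) ⪰ lm(qᵢ)·lm(gᵢ)` for all (nontrivial) `i`. -/
def HasGroebnerRep {K V : Type*} [Field K] {r : ℕ}
    (lo : LinearOrder ((V × (Fin r → ℕ)) →₀ ℕ))
    (G : Set (MvPolynomial (V × (Fin r → ℕ)) K))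
    (f : MvPolynomial (V × (Fin r → ℕ)) K) : Prop :=
  ∃ (n : ℕ) (q g : Fin n → MvPolynomial (V × (Fin r → ℕ)) K),
    (∀ i, g i ∈ G) ∧ f = ∑ i, q i * g i ∧
    ∀ i, q i ≠ 0 → g i ≠ 0 → oLE lo (lmo lo (q i) + lmo lo (g i)) (lmo lo f)

/-- The ideal `LM(S)` generated by the leading monomials of the nonzero elements
of `S`. -/
def lmIdeal {K V : Type*} [Field K] {r : ℕ} (lo : LinearOrder ((V × (Fin r → ℕ)) →₀ ℕ))
    (S : Set (MvPolynomial (V × (Fin r → ℕ)) K)) : Ideal (MvPolynomial (V × (Fin r → ℕ)) K) :=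
  Ideal.span ((fun g => (MvPolynomial.monomial (lmo lo g) (1 : K))) '' {g | g ∈ S ∧ g ≠ 0})

/-- `G ⊆ I` is a Gröbner basis of `I`: `LM(I)` is generated by `lm(G)`. -/
def IsGBasis {K V : Type*} [Field K] {r : ℕ} (lo : LinearOrder ((V × (Fin r → ℕ)) →₀ ℕ))
    (G : Set (MvPolynomial (V × (Fin r → ℕ)) K))
    (I : Ideal (MvPolynomial (V × (Fin r → ℕ)) K)) : Prop :=
  G ⊆ ↑I ∧ lmIdeal lo (I : Set (MvPolynomial (V × (Fin r → ℕ)) K)) = lmIdeal lo G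

/-- `G ⊆ I` is a Gröbner Σ-basis of `I`: `LM(I)` is generated by `Σ·lm(G)`. -/
def IsSigmaGBasis {K V : Type*} [Field K] {r : ℕ} (lo : LinearOrder ((V × (Fin r → ℕ)) →₀ ℕ))
    (G : Set (MvPolynomial (V × (Fin r → ℕ)) K))
    (I : Ideal (MvPolynomial (V × (Fin r → ℕ)) K)) : Prop :=
  G ⊆ ↑I ∧
  lmIdeal lo (I : Set (MvPolynomial (V × (Fin r → ℕ)) K)) =
    Ideal.span {p | ∃ (σ : Fin r → ℕ) (g : MvPolynomial (V × (Fin r → ℕ)) K),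
      g ∈ G ∧ g ≠ 0 ∧ p = MvPolynomial.monomial (shiftMon σ (lmo lo g)) (1 : K)}

/-- `I` is a Σ-ideal: it is invariant under all the shift endomorphisms. -/
def IsSigmaIdeal {K V : Type*} [CommSemiring K] {r : ℕ}
    (I : Ideal (MvPolynomial (V × (Fin r → ℕ)) K)) : Prop :=
  ∀ (σ : Fin r → ℕ) (p : MvPolynomial (V × (Fin r → ℕ)) K), p ∈ I → shiftPoly K σ p ∈ I

/-- The weight function `w : M → Σ̂ = Σ ∪ {0}` (here `Σ̂` is `WithBot (Fin r → ℕ)`,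
with `⊥` the extra element "0"):  `w(m)` is the `<`-maximum of the weights of the
variables occurring in `m`, where `<` is the given monomial ordering `loS` of `Σ`. -/
def wfun {V : Type*} {r : ℕ} (loS : LinearOrder (Fin r → ℕ))
    (m : (V × (Fin r → ℕ)) →₀ ℕ) : WithBot (Fin r → ℕ) :=
  @Finset.max _ loS (m.support.image (fun p => p.2))

/-- Addition in the idempotent semiring `Σ̂`: the maximum with respect to the
monomial ordering `loS` of `Σ`, with `⊥` as neutral element. -/
def hatAdd {r : ℕ} (loS : LinearOrder (Fin r → ℕ)) (a b : WithBot (Fin r → ℕ)) :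
    WithBot (Fin r → ℕ) :=
  @Max.max _ (@WithBot.linearOrder _ loS).toMax a b

/-- The order `≤` on `Σ̂` induced by the monomial ordering `loS` of `Σ`. -/
def hatLe {r : ℕ} (loS : LinearOrder (Fin r → ℕ)) (a b : WithBot (Fin r → ℕ)) : Prop :=
  @LE.le _ (@WithBot.linearOrder _ loS).toLE a b

/-- The strict order `<` on `Σ̂` induced by the monomial ordering `loS` of `Σ`. -/
def hatLt {r : ℕ} (loS : LinearOrder (Fin r → ℕ)) (a b : WithBot (Fin r → ℕ)) : Prop :=
  @LT.lt _ (@WithBot.linearOrder _ loS).toLT a b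

/-- The order function `ord : M → ℕ ∪ {−∞}`:  the maximum of `deg σ` over the
variables `x(σ)` occurring in `m` (and `−∞ = ⊥` for `m = 1`). -/
def ordFun {V : Type*} {r : ℕ} (m : (V × (Fin r → ℕ)) →₀ ℕ) : WithBot ℕ :=
  (m.support.image (fun p => degS p.2)).max

/-- A polynomial is `w`-homogeneous if all its monomials have the same weight. -/
def IsWHomog {K V : Type*} [CommSemiring K] {r : ℕ} (loS : LinearOrder (Fin r → ℕ))
    (f : MvPolynomial (V × (Fin r → ℕ)) K) : Prop :=
  ∀ m ∈ f.support, ∀ n ∈ f.support, wfun loS m = wfun loS n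

/-- A polynomial is `ord`-homogeneous if all its monomials have the same order. -/
def IsOrdHomog {K V : Type*} [CommSemiring K] {r : ℕ}
    (f : MvPolynomial (V × (Fin r → ℕ)) K) : Prop :=
  ∀ m ∈ f.support, ∀ n ∈ f.support, ordFun m = ordFun n

/-- The block `m(δ) ∈ M(δ) ≅ Mon(K[X])` of a monomial `m`, collecting the variables
of weight exactly `δ`. -/
def blockAt {X : Type*} {r : ℕ} (δ : Fin r → ℕ) (m : (X × (Fin r → ℕ)) →₀ ℕ) : X →₀ ℕ :=
  Finsupp.comapDomain (fun x => (x, δ)) m (fun _ _ _ _ h => congrArg Prod.fst h)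

/-- The weight Σ-ordering `≺_w` determined by a monomial ordering `ltS` of `Σ` and a
monomial ordering `lt1` of `P(1) = K[X(1)]` (transported to every block `P(δ)` via the
isomorphism `ρ(δ)`): compare the blocks of highest weight where the monomials differ. -/
def wlt {X : Type*} {r : ℕ} (ltS : (Fin r → ℕ) → (Fin r → ℕ) → Prop)
    (lt1 : (X →₀ ℕ) → (X →₀ ℕ) → Prop)
    (m n : (X × (Fin r → ℕ)) →₀ ℕ) : Prop :=
  ∃ δ : Fin r → ℕ, lt1 (blockAt δ m) (blockAt δ n) ∧
    ∀ ε : Fin r → ℕ, ltS δ ε → blockAt ε m = blockAt ε n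

/-- The block `m(x_j) ∈ M(x_j) ≅ Mon(K[x₀(Σ)])` of a monomial `m` (here `X = ℕ`),
collecting the variables of index exactly `j`. -/
def blockIdx {r : ℕ} (j : ℕ) (m : (ℕ × (Fin r → ℕ)) →₀ ℕ) : (Fin r → ℕ) →₀ ℕ :=
  Finsupp.comapDomain (fun σ => (j, σ)) m (fun _ _ _ _ h => congrArg Prod.snd h)

/-- The shift action of `σ ∈ Σ` on the monomials of `P(x₀) = K[x₀(Σ)]`. -/
def shiftMon0 {r : ℕ} (σ : Fin r → ℕ) (m : (Fin r → ℕ) →₀ ℕ) : (Fin r → ℕ) →₀ ℕ :=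
  Finsupp.mapDomain (fun τ => σ + τ) m

/-- The index Σ-ordering `≺_i` determined by a monomial Σ-ordering `lt0` of
`P(x₀) = K[x₀(Σ)]` (transported to every `P(x_j)` by the index shift): compare the
blocks of highest index where the monomials differ. -/
def ilt {r : ℕ} (lt0 : ((Fin r → ℕ) →₀ ℕ) → ((Fin r → ℕ) →₀ ℕ) → Prop)
    (m n : (ℕ × (Fin r → ℕ)) →₀ ℕ) : Prop :=
  ∃ j : ℕ, lt0 (blockIdx j m) (blockIdx j n) ∧ ∀ k : ℕ, j < k → blockIdx k m = blockIdx k n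

/- Homogenization setup:  `X̄ = X ∪ {t}` is modelled as `Option X`, with `none`
playing the role of the homogenizing variable `t` and `some x` that of `x ∈ X`;
thus `P̄ = K[X̄(Σ)] = MvPolynomial (Option X × (Fin r → ℕ)) K ⊇ P`. -/

/-- The inclusion `P = K[X(Σ)] ⊆ P̄ = K[X̄(Σ)]`. -/
def embP (K : Type*) [CommSemiring K] {X : Type*} {r : ℕ} :
    MvPolynomial (X × (Fin r → ℕ)) K →ₐ[K] MvPolynomial (Option X × (Fin r → ℕ)) K :=
  MvPolynomial.rename (fun p => (some p.1, p.2))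

/-- The inclusion `Mon(P) ⊆ Mon(P̄)` on monomials. -/
def embMon {X : Type*} {r : ℕ} (m : (X × (Fin r → ℕ)) →₀ ℕ) :
    (Option X × (Fin r → ℕ)) →₀ ℕ :=
  Finsupp.mapDomain (fun p => (some p.1, p.2)) m

/-- The dehomogenization Σ-endomorphism `φ : P̄ → P̄` with `x(σ) ↦ x(σ)`,
`t(σ) ↦ 1`. -/
def phiBar (K : Type*) [CommSemiring K] {X : Type*} {r : ℕ} :
    MvPolynomial (Option X × (Fin r → ℕ)) K →ₐ[K]
      MvPolynomial (Option X × (Fin r → ℕ)) K :=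
  MvPolynomial.aeval (fun p => p.1.elim 1 (fun x => MvPolynomial.X (some x, p.2)))

/-- The dehomogenization map `P̄ → P` with `x(σ) ↦ x(σ)`, `t(σ) ↦ 1`. -/
def dehom (K : Type*) [CommSemiring K] {X : Type*} {r : ℕ} :
    MvPolynomial (Option X × (Fin r → ℕ)) K →ₐ[K] MvPolynomial (X × (Fin r → ℕ)) K :=
  MvPolynomial.aeval (fun p => p.1.elim 1 (fun x => MvPolynomial.X (x, p.2)))

/-- `N`, the largest `ord`-graded Σ-ideal of `P̄` contained in `ker φ`: the ideal
generated by all `ord`-homogeneous elements of `ker φ`. -/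
def Nideal (K : Type*) [CommSemiring K] (X : Type*) (r : ℕ) :
    Ideal (MvPolynomial (Option X × (Fin r → ℕ)) K) :=
  Ideal.span {f | IsOrdHomog f ∧ phiBar K f = 0}

/-- The top order of a polynomial: the maximum of the orders of its monomials. -/
def topord {K V : Type*} [CommSemiring K] {r : ℕ}
    (f : MvPolynomial (V × (Fin r → ℕ)) K) : WithBot ℕ :=
  f.support.sup (fun m => ordFun m)

/-- The `ord`-homogenization `I*` of an ideal `I ⊆ P`: the ideal of `P̄` generated by
all `ord`-homogeneous elements of `φ⁻¹(I)`. -/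
def Istar {K : Type*} [Field K] {X : Type*} {r : ℕ}
    (I : Ideal (MvPolynomial (X × (Fin r → ℕ)) K)) :
    Ideal (MvPolynomial (Option X × (Fin r → ℕ)) K) :=
  Ideal.span {f | IsOrdHomog f ∧ dehom K f ∈ I}

/-- A monomial of `P̄` is `t`-free when it lies in `M = Mon(P)`. -/
def TFree {X : Type*} {r : ℕ} (m : (Option X × (Fin r → ℕ)) →₀ ℕ) : Prop :=
  ∀ p ∈ m.support, p.1 ≠ (none : Option X)

/-- A monomial of `P̄` is normal modulo `N` if it is of the form `m ∈ M`, or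
`t(σ)·n` with `n ∈ M`, `deg σ > ord n` and `t(σ)` the `≺`-least variable `t(τ)`
with `deg τ = deg σ`. -/
def NormalMon {X : Type*} {r : ℕ} (lo : LinearOrder ((Option X × (Fin r → ℕ)) →₀ ℕ))
    (m : (Option X × (Fin r → ℕ)) →₀ ℕ) : Prop :=
  TFree m ∨ ∃ (σ : Fin r → ℕ) (n : (Option X × (Fin r → ℕ)) →₀ ℕ),
    TFree n ∧ ordFun n < (degS σ : WithBot ℕ) ∧
    m = Finsupp.single ((none : Option X), σ) 1 + n ∧
    ∀ τ : Fin r → ℕ, degS τ = degS σ →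
      oLE lo (Finsupp.single ((none : Option X), σ) 1)
        (Finsupp.single ((none : Option X), τ) 1)

/-- `lo` is an `ord`-homogenization Σ-ordering of `P̄`: it is compatible with the
order function, and `t(σ)·m ≺ n` whenever `m, n ∈ M` and `deg σ = ord n > ord m`. -/
def IsHomogOrd {X : Type*} {r : ℕ}
    (lo : LinearOrder ((Option X × (Fin r → ℕ)) →₀ ℕ)) : Prop :=
  (∀ m n : (Option X × (Fin r → ℕ)) →₀ ℕ, ordFun m < ordFun n → oLT lo m n) ∧
  ∀ (m n : (Option X × (Fin r → ℕ)) →₀ ℕ) (σ : Fin r → ℕ),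
    TFree m → TFree n → (degS σ : WithBot ℕ) = ordFun n → ordFun m < ordFun n →
    oLT lo (Finsupp.single ((none : Option X), σ) 1 + m) n

end


noncomputable section AuxST13

open MvPolynomial

variable {K : Type*} [Field K] {X : Type*} {r : ℕ}

local notation "μ" => ((X × (Fin r → ℕ)) →₀ ℕ)
local notation "Poly" => MvPolynomial (X × (Fin r → ℕ)) K

/-- order of a sum of monomials -/
lemma aux13_ordFun_add (a b : μ) : ordFun (a + b) = ordFun a ⊔ ordFun b := by
  classical
  have hsupp : (a + b).support = a.support ∪ b.support := by
    ext p
    simp only [Finsupp.mem_support_iff, Finsupp.add_apply, Finset.mem_union]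
    omega
  rw [ordFun, ordFun, ordFun, hsupp, Finset.image_union, Finset.max_union]

lemma aux13_lmo_mem (lo : LinearOrder μ) {f : Poly} (hf : f ≠ 0) :
    lmo lo f ∈ f.support := by
  rw [lmo, dif_neg hf]
  exact @Finset.max'_mem _ lo _ _

lemma aux13_le_lmo (lo : LinearOrder μ) {f : Poly} (hf : f ≠ 0) {m : μ}
    (hm : m ∈ f.support) : oLE lo m (lmo lo f) := by
  rw [lmo, dif_neg hf]
  exact @Finset.le_max' _ lo _ _ hm

lemma aux13_lmo_eq (lo : LinearOrder μ) {f g : Poly} (hf : f ≠ 0) (hg : g ≠ 0)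
    (hsub : g.support ⊆ f.support) (hmem : lmo lo f ∈ g.support) :
    lmo lo g = lmo lo f := by
  exact lo.le_antisymm _ _ (aux13_le_lmo lo hf (hsub (aux13_lmo_mem lo hg)))
    (aux13_le_lmo lo hg hmem)

/-- the order-`e` component of a polynomial -/
def aux13_comp (e : WithBot ℕ) (f : Poly) : Poly :=
  letI := Classical.decPred (fun m : μ => ordFun m = e)
  AddMonoidAlgebra.ofCoeff (Finsupp.filter (fun m : μ => ordFun m = e) (AddMonoidAlgebra.coeff f))

lemma aux13_coeff_comp (e : WithBot ℕ) (f : Poly) (m : μ) :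
    letI := Classical.decPred (fun m : μ => ordFun m = e)
    MvPolynomial.coeff m (aux13_comp e f) = if ordFun m = e then MvPolynomial.coeff m f else 0 := by
  letI := Classical.decPred (fun m : μ => ordFun m = e)
  exact Finsupp.filter_apply _ (AddMonoidAlgebra.coeff f) m

lemma aux13_mem_support_comp {e : WithBot ℕ} {f : Poly} {m : μ} :
    m ∈ (aux13_comp e f).support ↔ m ∈ f.support ∧ ordFun m = e := by
  classical
  rw [MvPolynomial.mem_support_iff, aux13_coeff_comp]
  split_ifs with hc
  · simp [MvPolynomial.mem_support_iff, hc]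
  · simp [hc]

lemma aux13_comp_add (e : WithBot ℕ) (f g : Poly) :
    aux13_comp e (f + g) = aux13_comp e f + aux13_comp e g := by
  classical
  ext m
  rw [MvPolynomial.coeff_add, aux13_coeff_comp, aux13_coeff_comp, aux13_coeff_comp,
    MvPolynomial.coeff_add]
  split_ifs <;> simp

lemma aux13_comp_zero (e : WithBot ℕ) : aux13_comp e (0 : Poly) = 0 := by
  classical
  ext m
  rw [aux13_coeff_comp]
  split_ifs <;> simp

/-- component of a product with an ord-homogeneous polynomial -/
lemma aux13_comp_mul_homog {h : Poly} (hh : IsOrdHomog h) (p : Poly) (e : WithBot ℕ) :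
    ∃ q : Poly, aux13_comp e (p * h) = q * h := by
  classical
  by_cases h0 : h = 0
  · exact ⟨0, by simp [h0, aux13_comp_zero]⟩
  obtain ⟨m₀, hm₀⟩ := (MvPolynomial.support_nonempty.2 h0)
  set eh := ordFun m₀ with heh
  have hord : ∀ b ∈ h.support, ordFun b = eh := fun b hb => hh b hb m₀ hm₀
  refine ⟨AddMonoidAlgebra.ofCoeff (Finsupp.filter (fun a : μ => ordFun a ⊔ eh = e) (AddMonoidAlgebra.coeff p)), ?_⟩
  ext m
  rw [aux13_coeff_comp, MvPolynomial.coeff_mul, MvPolynomial.coeff_mul]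
  have key : ∀ x ∈ Finset.HasAntidiagonal.antidiagonal m,
      (if ordFun m = e then MvPolynomial.coeff x.1 p * MvPolynomial.coeff x.2 h else 0) =
      MvPolynomial.coeff x.1 (AddMonoidAlgebra.ofCoeff (Finsupp.filter (fun a : μ => ordFun a ⊔ eh = e) (AddMonoidAlgebra.coeff p))) *
        MvPolynomial.coeff x.2 h := by
    rintro ⟨a, b⟩ hx
    rw [Finset.HasAntidiagonal.mem_antidiagonal] at hx
    have hfa : MvPolynomial.coeff a (AddMonoidAlgebra.ofCoeff (Finsupp.filter (fun a : μ => ordFun a ⊔ eh = e) (AddMonoidAlgebra.coeff p)))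
        = if ordFun a ⊔ eh = e then MvPolynomial.coeff a p else 0 :=
      Finsupp.filter_apply _ (AddMonoidAlgebra.coeff p) a
    by_cases hb : MvPolynomial.coeff b h = 0
    · simp [hb]
    · have hob : ordFun b = eh := hord b (MvPolynomial.mem_support_iff.2 hb)
      have hom : ordFun m = ordFun a ⊔ eh := by
        rw [← hx, aux13_ordFun_add, hob]
      rw [hfa, hom]
      split_ifs <;> simp
  have hswap : (if ordFun m = e then ∑ x ∈ Finset.HasAntidiagonal.antidiagonal m,
      MvPolynomial.coeff x.1 p * MvPolynomial.coeff x.2 h else 0) =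
      ∑ x ∈ Finset.HasAntidiagonal.antidiagonal m,
        (if ordFun m = e then MvPolynomial.coeff x.1 p * MvPolynomial.coeff x.2 h else 0) := by
    split_ifs with hP
    · rfl
    · simp
  have hfin := hswap.trans (Finset.sum_congr rfl key)
  convert hfin using 2

/-- components of elements of an ord-graded ideal stay in the ideal -/
lemma aux13_comp_mem {I : Ideal Poly} (hIgr : I = Ideal.span {f : Poly | f ∈ I ∧ IsOrdHomog f})
    {f : Poly} (hf : f ∈ I) (e : WithBot ℕ) : aux13_comp e f ∈ I := by
  have main : ∀ g ∈ I, ∀ (p : Poly) (e : WithBot ℕ), aux13_comp e (p * g) ∈ I := by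
    intro g hg
    rw [hIgr] at hg
    refine Submodule.span_induction (p := fun x _ => ∀ (p : Poly) (e : WithBot ℕ),
        aux13_comp e (p * x) ∈ I) ?_ ?_ ?_ ?_ hg
    · rintro x ⟨hxI, hxhom⟩ p e
      obtain ⟨q, hq⟩ := aux13_comp_mul_homog hxhom p e
      rw [hq]
      exact Ideal.mul_mem_left _ _ hxI
    · intro p e
      rw [mul_zero, aux13_comp_zero]
      exact I.zero_mem
    · intro x y _ _ hx hy p e
      rw [mul_add, aux13_comp_add]
      exact I.add_mem (hx p e) (hy p e)
    · intro a x _ hx p e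
      have : p * (a • x) = (p * a) * x := by
        rw [smul_eq_mul]; ring
      rw [this]
      exact hx (p * a) e
  have := main f hf 1 e
  rwa [one_mul] at this

/-- extraction of an ord-homogeneous component with the same leading monomial -/
lemma aux13_exists_component (lo : LinearOrder μ)
    {I : Ideal Poly} (hIgr : I = Ideal.span {f : Poly | f ∈ I ∧ IsOrdHomog f})
    {f : Poly} (hfI : f ∈ I) (hf : f ≠ 0) :
    ∃ g : Poly, g ∈ I ∧ g ≠ 0 ∧ IsOrdHomog g ∧ lmo lo g = lmo lo f ∧
      g.support ⊆ f.support := by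
  set e := ordFun (lmo lo f) with he
  set g := aux13_comp e f with hgdef
  have hmem : lmo lo f ∈ g.support :=
    aux13_mem_support_comp.2 ⟨aux13_lmo_mem lo hf, rfl⟩
  have hg0 : g ≠ 0 := by
    intro h0
    rw [h0] at hmem
    simp at hmem
  have hsub : g.support ⊆ f.support := fun m hm => (aux13_mem_support_comp.1 hm).1
  refine ⟨g, aux13_comp_mem hIgr hfI e, hg0, ?_, aux13_lmo_eq lo hf hg0 hsub hmem, hsub⟩
  intro m hm n hn
  rw [(aux13_mem_support_comp.1 hm).2, (aux13_mem_support_comp.1 hn).2]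

end AuxST13

noncomputable section AuxST13B

open MvPolynomial

variable {K : Type*} [Field K] {X : Type*} {r : ℕ}

local notation "μ" => ((X × (Fin r → ℕ)) →₀ ℕ)
local notation "Poly" => MvPolynomial (X × (Fin r → ℕ)) K

lemma aux13_shift_inj (σ : Fin r → ℕ) :
    Function.Injective (fun p : X × (Fin r → ℕ) => (p.1, σ + p.2)) := by
  rintro ⟨a1, a2⟩ ⟨b1, b2⟩ hab
  simp only [Prod.mk.injEq] at hab
  exact Prod.ext hab.1 (add_left_cancel hab.2)

lemma aux13_shiftPoly_ne_zero (σ : Fin r → ℕ) {g : Poly} (hg : g ≠ 0) :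
    shiftPoly K σ g ≠ 0 := by
  intro h0
  apply hg
  have := MvPolynomial.rename_injective (R := K) _ (aux13_shift_inj (X := X) σ)
  apply this
  rw [map_zero]
  exact h0

lemma aux13_mem_support_shiftPoly (σ : Fin r → ℕ) (g : Poly) (n : μ) :
    n ∈ (shiftPoly K σ g).support ↔ ∃ m ∈ g.support, shiftMon σ m = n := by
  classical
  rw [shiftPoly, MvPolynomial.support_rename_of_injective (aux13_shift_inj σ),
    Finset.mem_image]
  rfl

lemma aux13_shiftMon_zero (m : μ) : shiftMon 0 m = m := by
  have : (fun p : X × (Fin r → ℕ) => (p.1, (0 : Fin r → ℕ) + p.2)) = id := by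
    funext p
    simp
  rw [shiftMon, this, Finsupp.mapDomain_id]

lemma aux13_lmo_shiftPoly (lo : LinearOrder μ)
    (hshift : ∀ (σ : Fin r → ℕ) (m n : μ), oLT lo m n → oLT lo (shiftMon σ m) (shiftMon σ n))
    (σ : Fin r → ℕ) {g : Poly} (hg : g ≠ 0) :
    lmo lo (shiftPoly K σ g) = shiftMon σ (lmo lo g) := by
  classical
  have hs0 : shiftPoly K σ g ≠ 0 := aux13_shiftPoly_ne_zero σ hg
  refine lo.le_antisymm _ _ ?_ ?_
  · have hmem := aux13_lmo_mem lo hs0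
    rw [aux13_mem_support_shiftPoly] at hmem
    obtain ⟨m, hm, heq⟩ := hmem
    rw [← heq]
    have hle : oLE lo m (lmo lo g) := aux13_le_lmo lo hg hm
    by_cases heq2 : m = lmo lo g
    · rw [heq2]
      exact lo.le_refl _
    · have hlt : oLT lo m (lmo lo g) :=
        (lo.lt_iff_le_not_ge m (lmo lo g)).2
          ⟨hle, fun hge => heq2 (lo.le_antisymm _ _ hle hge)⟩
      exact ((lo.lt_iff_le_not_ge _ _).1 (hshift σ _ _ hlt)).1
  · apply aux13_le_lmo lo hs0
    rw [aux13_mem_support_shiftPoly]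
    exact ⟨lmo lo g, aux13_lmo_mem lo hg, rfl⟩

/-- Dickson-type extraction: a set of monomials supported in a fixed finite set of
variables has a finite subset below every element. -/
lemma aux13_dickson {T : Set (X × (Fin r → ℕ))} (hT : T.Finite) (S : Set μ)
    (hS : ∀ m ∈ S, ∀ p ∈ m.support, p ∈ T) :
    ∃ B ⊆ S, B.Finite ∧ ∀ s ∈ S, ∃ b ∈ B, b ≤ s := by
  classical
  haveI : Finite ↥T := hT.to_subtype
  -- S is partially well ordered
  have hSeq : (fun u : ↥T →₀ ℕ => u.extendDomain) ''
      ((fun m : μ => Finsupp.subtypeDomain (· ∈ T) m) '' S) = S := by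
    ext m
    constructor
    · rintro ⟨u, ⟨n, hn, rfl⟩, rfl⟩
      dsimp only
      rwa [Finsupp.extendDomain_subtypeDomain _ (hS n hn)]
    · intro hm
      exact ⟨Finsupp.subtypeDomain (· ∈ T) m, ⟨m, hm, rfl⟩,
        Finsupp.extendDomain_subtypeDomain _ (hS m hm)⟩
  have hmono : Monotone (fun u : ↥T →₀ ℕ => u.extendDomain) := by
    intro u v huv
    intro x
    rw [Finsupp.extendDomain_apply, Finsupp.extendDomain_apply]
    split_ifs with hx
    · exact huv _
    · exact le_refl 0
  have hPWO : S.IsPWO := by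
    rw [← hSeq]
    exact (Set.isPWO_of_wellQuasiOrderedLE _).image_of_monotone hmono
  -- minimal elements
  set B : Set μ := {s | s ∈ S ∧ ∀ t ∈ S, t ≤ s → t = s} with hB
  refine ⟨B, fun b hb => hb.1, ?_, ?_⟩
  · by_contra hinf
    rw [← Set.not_infinite, not_not] at hinf
    have e := hinf.natEmbedding
    obtain ⟨i, j, hij, hle⟩ := Set.PartiallyWellOrderedOn.exists_lt hPWO (f := fun n => ((e n : ↥B) : μ)) (fun n => (e n).2.1)
    have heq := (e j).2.2 _ (e i).2.1 hle
    have hne : i ≠ j := Nat.ne_of_lt hij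
    exact hne (e.injective (Subtype.ext heq))
  · intro s hs
    set T' : Set μ := {t | t ∈ S ∧ t ≤ s} with hT'
    have hwf : T'.IsWF := hPWO.isWF.mono (fun t ht => ht.1)
    have hne : T'.Nonempty := ⟨s, hs, le_refl s⟩
    refine ⟨hwf.min hne, ⟨(hwf.min_mem hne).1, ?_⟩, (hwf.min_mem hne).2⟩
    intro t ht hle
    have htT' : t ∈ T' := ⟨ht, le_trans hle (hwf.min_mem hne).2⟩
    have hnlt := hwf.not_lt_min hne htT'
    by_contra hne2
    exact hnlt (lt_of_le_of_ne hle hne2)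

end AuxST13B


/-- **truncated termination over the order.** `X` finite, `P` endowed
with a monomial Σ-ordering. If an `ord`-graded Σ-ideal `I ⊆ P` has an
`ord`-homogeneous Σ-basis `H` with `H_d = {f ∈ H : ord(f) ≤ d}` finite, then `I` has
an `ord`-homogeneous Gröbner Σ-basis `G` with `G_d` finite. -/
theorem statement_13 {K : Type*} [Field K] {X : Type*} [Fintype X] {r : ℕ}
    (lo : LinearOrder ((X × (Fin r → ℕ)) →₀ ℕ)) (h : IsMonOrd lo)
    (hshift : ∀ (σ : Fin r → ℕ) (m n : (X × (Fin r → ℕ)) →₀ ℕ),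
      oLT lo m n → oLT lo (shiftMon σ m) (shiftMon σ n))
    (I : Ideal (MvPolynomial (X × (Fin r → ℕ)) K))
    (hIsig : IsSigmaIdeal I)
    (hIgr : I = Ideal.span {f | f ∈ I ∧ IsOrdHomog f})
    (d : ℕ)
    (H : Set (MvPolynomial (X × (Fin r → ℕ)) K))
    (hHI : H ⊆ ↑I)
    (hHhom : ∀ f ∈ H, IsOrdHomog f)
    (hHgen : I = Ideal.span (shiftSet K H))
    (hHfin : {f | f ∈ H ∧ ∀ m ∈ f.support, ordFun m ≤ (d : WithBot ℕ)}.Finite) :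
    ∃ G : Set (MvPolynomial (X × (Fin r → ℕ)) K),
      (∀ f ∈ G, IsOrdHomog f) ∧ IsSigmaGBasis lo G I ∧
      {f | f ∈ G ∧ ∀ m ∈ f.support, ordFun m ≤ (d : WithBot ℕ)}.Finite := by
    classical
  set Low : MvPolynomial (X × (Fin r → ℕ)) K → Prop :=
    fun f => ∀ m ∈ f.support, ordFun m ≤ (d : WithBot ℕ) with hLow
  -- the set of leading monomials of low-order ord-homogeneous elements of I
  set S : Set ((X × (Fin r → ℕ)) →₀ ℕ) :=
    {m | ∃ f, f ∈ I ∧ f ≠ 0 ∧ IsOrdHomog f ∧ Low f ∧ lmo lo f = m} with hS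
  -- variables appearing in elements of S have total degree ≤ d
  have hTfin : ({q : X × (Fin r → ℕ) | degS q.2 ≤ d}).Finite := by
    have h1 : ({σ : Fin r → ℕ | degS σ ≤ d}).Finite := by
      apply (Set.finite_Icc (fun _ => (0 : ℕ)) (fun _ => d)).subset
      intro σ hσ
      refine ⟨fun i => Nat.zero_le _, fun i => le_trans ?_ hσ⟩
      exact Finset.single_le_sum (fun j _ => Nat.zero_le (σ j)) (Finset.mem_univ i)
    exact ((Set.finite_univ (α := X)).prod h1).subset (fun q hq => ⟨trivial, hq⟩)
  have hSsupp : ∀ m ∈ S, ∀ p ∈ m.support, p ∈ {q : X × (Fin r → ℕ) | degS q.2 ≤ d} := by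
    rintro m ⟨f, hfI, hf0, hfhom, hflow, rfl⟩ p hp
    have h1 : (degS p.2 : WithBot ℕ) ≤ ordFun (lmo lo f) := by
      rw [ordFun]
      exact Finset.le_max (Finset.mem_image_of_mem _ hp)
    have h2 : ordFun (lmo lo f) ≤ (d : WithBot ℕ) := hflow _ (aux13_lmo_mem lo hf0)
    exact_mod_cast le_trans h1 h2
  obtain ⟨B, hBS, hBfin, hBcof⟩ := aux13_dickson hTfin S hSsupp
  -- choose a witness for each element of S
  have hwit : ∀ b : ((X × (Fin r → ℕ)) →₀ ℕ), ∃ f : MvPolynomial (X × (Fin r → ℕ)) K,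
      b ∈ S → (f ∈ I ∧ f ≠ 0 ∧ IsOrdHomog f ∧ Low f ∧ lmo lo f = b) := by
    intro b
    by_cases hb : b ∈ S
    · obtain ⟨f, hf⟩ := hb
      exact ⟨f, fun _ => hf⟩
    · exact ⟨0, fun hb' => absurd hb' hb⟩
  choose fb hfb using hwit
  set F : Set (MvPolynomial (X × (Fin r → ℕ)) K) := fb '' B with hF
  set Ghigh : Set (MvPolynomial (X × (Fin r → ℕ)) K) :=
    {f | f ∈ I ∧ f ≠ 0 ∧ IsOrdHomog f ∧ ¬ Low f} with hGhigh
  refine ⟨F ∪ Ghigh, ?_, ⟨?_, ?_⟩, ?_⟩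
  · -- ord-homogeneity
    rintro f (⟨b, hb, rfl⟩ | hf)
    · exact (hfb b (hBS hb)).2.2.1
    · exact hf.2.2.1
  · -- G ⊆ I
    rintro f (⟨b, hb, rfl⟩ | hf)
    · exact (hfb b (hBS hb)).1
    · exact hf.1
  · -- the leading monomial ideals agree
    apply le_antisymm
    · rw [lmIdeal, Ideal.span_le]
      rintro p ⟨g, ⟨hgI, hg0⟩, rfl⟩
      dsimp only
      obtain ⟨g', hg'I, hg'0, hg'hom, hg'lm, hg'sub⟩ :=
        aux13_exists_component lo hIgr hgI hg0
      by_cases hlow : Low g'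
      · -- low order: use the Dickson basis
        obtain ⟨b, hbB, hble⟩ := hBcof (lmo lo g') ⟨g', hg'I, hg'0, hg'hom, hlow, rfl⟩
        have hfbb := hfb b (hBS hbB)
        have hgen : MvPolynomial.monomial (shiftMon 0 (lmo lo (fb b))) (1 : K) ∈
            Ideal.span {p | ∃ (σ : Fin r → ℕ) (g'' : MvPolynomial (X × (Fin r → ℕ)) K),
              g'' ∈ F ∪ Ghigh ∧ g'' ≠ 0 ∧
              p = MvPolynomial.monomial (shiftMon σ (lmo lo g'')) 1} :=
          Ideal.subset_span ⟨0, fb b, Or.inl ⟨b, hbB, rfl⟩, hfbb.2.1, rfl⟩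
        have heq : (MvPolynomial.monomial (lmo lo g) (1 : K)) =
            MvPolynomial.monomial (lmo lo g' - b) 1 *
              MvPolynomial.monomial (shiftMon 0 (lmo lo (fb b))) 1 := by
          rw [aux13_shiftMon_zero, hfbb.2.2.2.2, MvPolynomial.monomial_mul, one_mul,
            tsub_add_cancel_of_le hble, hg'lm]
        rw [heq]
        exact Ideal.mul_mem_left _ _ hgen
      · -- high order: g' itself is in G
        apply Ideal.subset_span
        refine ⟨0, g', Or.inr ⟨hg'I, hg'0, hg'hom, hlow⟩, hg'0, ?_⟩
        rw [aux13_shiftMon_zero, hg'lm]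
    · rw [Ideal.span_le]
      rintro p ⟨σ, g, hgG, hg0, rfl⟩
      have hgI : g ∈ I := by
        rcases hgG with ⟨b, hb, rfl⟩ | hf
        · exact (hfb b (hBS hb)).1
        · exact hf.1
      apply Ideal.subset_span
      refine ⟨shiftPoly K σ g, ⟨hIsig σ g hgI, aux13_shiftPoly_ne_zero σ hg0⟩, ?_⟩
      dsimp only
      rw [aux13_lmo_shiftPoly lo hshift σ hg0]
  · -- finiteness of G_d
    apply (hBfin.image fb).subset
    rintro f ⟨(hfF | hfGh), hflow⟩
    · exact hfF
    · exact absurd hflow hfGh.2.2.2
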